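/- In the inexact LM setting: with A ∈ ℝ^{m×n}, ‖A‖ ≤ L₀, μ > 0, H = A Aᵀ + μ I, g = A b, d with residual r = H d + g, ‖r‖ ≤ τ μ ‖d‖ for τ ∈ (0,1/2), and q(d) = (1/2)‖Aᵀ d + b‖², one has q(0) − q(d) ≤ ((1/2) L₀² + (1+τ) μ) ‖d‖². -/

import Mathlib

open scoped RealInnerProductSpace


/-- Model decrease upper bound for the inexact LM step: with `H = A Aᵀ + μ I`,
`g = A b`, residual `r = H d + g` with `‖r‖ ≤ τ μ ‖d‖` for `τ ∈ (0,1/2)`, and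
`q(d) = (1/2)‖Aᵀ d + b‖²`, with `‖A‖ ≤ L₀`, one has `q(0) − q(d) ≤ ((1/2)L₀² + (1+τ)μ)‖d‖²`. -/
theorem model_decrease_upper (m n : ℕ)
    (A : EuclideanSpace ℝ (Fin n) →L[ℝ] EuclideanSpace ℝ (Fin m))
    (b : EuclideanSpace ℝ (Fin n)) (μ τ : ℝ)
    (L₀ : ℝ) (hA : ‖A‖ ≤ L₀) (hμ : 0 < μ) (hτ : τ ∈ Set.Ioo (0 : ℝ) (1 / 2))
    (H : EuclideanSpace ℝ (Fin m) →L[ℝ] EuclideanSpace ℝ (Fin m))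
    (hH : H = A.comp (ContinuousLinearMap.adjoint A) + μ • ContinuousLinearMap.id ℝ _)
    (g d r : EuclideanSpace ℝ (Fin m))
    (hg : g = A b) (hr : r = H d + g) (hres : ‖r‖ ≤ τ * μ * ‖d‖)
    (q : EuclideanSpace ℝ (Fin m) → ℝ)
    (hq : ∀ u, q u = (1 / 2) * ‖(ContinuousLinearMap.adjoint A) u + b‖ ^ 2) :
    q 0 - q d ≤ ((1 / 2) * L₀ ^ 2 + (1 + τ) * μ) * ‖d‖ ^ 2 := by
  obtain ⟨hτ0, hτ2⟩ := hτ
  set A' := ContinuousLinearMap.adjoint A with hA'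
  -- inner product of d with r
  have hHd : H d = A (A' d) + μ • d := by
    simp [hH, ContinuousLinearMap.add_apply, ContinuousLinearMap.comp_apply]
  have hdr : (inner ℝ (d) (r) : ℝ) = ‖A' d‖ ^ 2 + μ * ‖d‖ ^ 2 + (inner ℝ (A' d) (b) : ℝ) := by
    rw [hr, hHd, hg]
    rw [inner_add_right, inner_add_right, inner_smul_right]
    rw [ContinuousLinearMap.adjoint_inner_left, real_inner_self_eq_norm_sq,
      ← ContinuousLinearMap.adjoint_inner_left]
    rw [← hA', real_inner_self_eq_norm_sq]
    try ring
  -- expand q 0 - q d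
  have hexp : q 0 - q d = μ * ‖d‖ ^ 2 + (1 / 2) * ‖A' d‖ ^ 2 - (inner ℝ (d) (r) : ℝ) := by
    rw [hq, hq]
    have h0 : A' (0 : EuclideanSpace ℝ (Fin m)) = 0 := map_zero A'
    rw [h0, zero_add]
    have hn : ‖A' d + b‖ ^ 2 = ‖A' d‖ ^ 2 + 2 * (inner ℝ (A' d) (b) : ℝ) + ‖b‖ ^ 2 :=
      norm_add_sq_real _ _
    rw [hn, hdr]
    ring
  have hAd : ‖A' d‖ ≤ L₀ * ‖d‖ := by
    calc ‖A' d‖ ≤ ‖A'‖ * ‖d‖ := A'.le_opNorm d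
    _ ≤ L₀ * ‖d‖ := by
        apply mul_le_mul_of_nonneg_right _ (norm_nonneg d)
        rw [hA', show ‖ContinuousLinearMap.adjoint A‖ = ‖A‖ from
          LinearIsometryEquiv.norm_map _ A]
        exact hA
  have hinner : -(inner ℝ (d) (r) : ℝ) ≤ τ * μ * ‖d‖ ^ 2 := by
    have h1 : -(inner ℝ (d) (r) : ℝ) ≤ ‖d‖ * ‖r‖ := by
      have := abs_real_inner_le_norm d r
      linarith [neg_abs_le ((inner ℝ (d) (r) : ℝ))]
    calc -(inner ℝ (d) (r) : ℝ) ≤ ‖d‖ * ‖r‖ := h1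
      _ ≤ ‖d‖ * (τ * μ * ‖d‖) := mul_le_mul_of_nonneg_left hres (norm_nonneg d)
      _ = τ * μ * ‖d‖ ^ 2 := by ring
  rw [hexp]
  nlinarith [norm_nonneg (A' d), norm_nonneg d, sq_nonneg (‖d‖)]
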